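/- Let E be a complex Banach space, q>1 real, k≥1 an integer, and E a bounded sector at the origin. If f: E → E is holomorphic and admits the zero formal power series as its q-Gevrey asymptotic expansion of order 1/k on E, then for every subsector Ẽ ≺ E there exist C>0 and K∈ℝ such that ‖f(ε)‖ ≤ C·exp(−(k/(2 log q))·(log|ε|)²)·|ε|^K for all ε ∈ Ẽ. Conversely, this q-exponential flatness implies null q-Gevrey asymptotic expansion of order 1/k. -/

import Mathlib

open Complex

/-- A bounded open sector at the origin with aperture `(θ₁, θ₂)` and radius `r`. -/
def Sector (θ₁ θ₂ r : ℝ) : Set ℂ :=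
  {z : ℂ | z ≠ 0 ∧ ‖z‖ < r ∧ θ₁ < Complex.arg z ∧ Complex.arg z < θ₂}

/-- `S₁ ≺ S`: `S₁` is a bounded sector at the origin whose closure minus `{0}` is
contained in `S`. -/
def IsSubsector (S₁ S : Set ℂ) : Prop :=
  (∃ θ₁ θ₂ r : ℝ, 0 < r ∧ S₁ = Sector θ₁ θ₂ r) ∧ closure S₁ \ {0} ⊆ S

/-- `f` admits `Σ aₙ εⁿ` as its `q`-Gevrey asymptotic expansion of order `1/k` on `S`. -/
def HasQGevreyExpansion {E : Type*} [NormedAddCommGroup E] [NormedSpace ℂ E]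
    (q : ℝ) (k : ℕ) (S : Set ℂ) (f : ℂ → E) (a : ℕ → E) : Prop :=
  ∀ S₁ : Set ℂ, IsSubsector S₁ S → ∃ C A : ℝ, 0 < C ∧ 0 < A ∧
    ∀ N : ℕ, ∀ ε ∈ S₁,
      ‖f ε - ∑ n ∈ Finset.range (N + 1), ε ^ n • a n‖ ≤
        C * A ^ (N + 1) * q ^ ((N * (N + 1) : ℝ) / (2 * k)) * ‖ε‖ ^ (N + 1)

set_option maxHeartbeats 1000000 in
/-- a holomorphic function on a bounded sector has the zero series as its
`q`-Gevrey asymptotic expansion of order `1/k` if and only if it is `q`-exponentially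
flat of order `k` on every subsector. -/
theorem qGevrey_null_iff_flat {E : Type*} [NormedAddCommGroup E] [NormedSpace ℂ E]
    [CompleteSpace E] (q : ℝ) (hq : 1 < q) (k : ℕ) (hk : 1 ≤ k)
    (S : Set ℂ) (hS : ∃ θ₁ θ₂ r : ℝ, 0 < r ∧ S = Sector θ₁ θ₂ r)
    (f : ℂ → E) (hf : DifferentiableOn ℂ f S) :
    HasQGevreyExpansion q k S f (fun _ => 0) ↔
      ∀ S₁ : Set ℂ, IsSubsector S₁ S → ∃ C K : ℝ, 0 < C ∧
        ∀ ε ∈ S₁, ‖f ε‖ ≤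
          C * Real.exp (-(k / (2 * Real.log q)) * (Real.log (‖ε‖)) ^ 2) *
            ‖ε‖ ^ K := by
  have hq0 : (0:ℝ) < q := lt_trans one_pos hq
  have hL : 0 < Real.log q := Real.log_pos hq
  have hk1 : (1:ℝ) ≤ (k:ℝ) := by exact_mod_cast hk
  have hk0 : (0:ℝ) < (k:ℝ) := lt_of_lt_of_le one_pos hk1
  have hkne : (k:ℝ) ≠ 0 := ne_of_gt hk0
  set L := Real.log q with hLdef
  have hLne : L ≠ 0 := ne_of_gt hL
  set c : ℝ := L / (2 * k) with hcdef
  have hc : 0 < c := div_pos hL (by linarith)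
  constructor
  · intro hE S₁ hS₁
    obtain ⟨C, A, hC, hA, h⟩ := hE S₁ hS₁
    obtain ⟨⟨θ₁, θ₂, r, hr, hS₁eq⟩, -⟩ := hS₁
    set a := Real.log A with hadef
    set tlb : ℝ := -(Real.log r + a) / (2*c) - 1/2 with htlbdef
    set M : ℝ := max 1 (1 - tlb) with hMdef
    have hM1 : (1:ℝ) ≤ M := le_max_left _ _
    have hCexp : ∀ u v w : ℝ, C * Real.exp u * Real.exp v * Real.exp w
        = C * Real.exp (u + v + w) := by
      intro u v w; rw [Real.exp_add, Real.exp_add]; ring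
    refine ⟨C * Real.exp (c*M^2 + a - (a+c)^2/(4*c)), 1/2 - a/(2*c), by positivity, ?_⟩
    intro ε hε
    have hε0 : ε ≠ 0 := by rw [hS₁eq] at hε; exact hε.1
    have habs : 0 < ‖ε‖ := norm_pos_iff.mpr hε0
    have hεr : ‖ε‖ < r := by rw [hS₁eq] at hε; exact hε.2.1
    set x := Real.log (‖ε‖) with hxdef
    have hxr : x < Real.log r := Real.log_lt_log habs hεr
    set t : ℝ := -(x + a)/(2*c) - 1/2 with htdef
    have htgt : tlb < t := by
      have hEq : t - tlb = (Real.log r - x)/(2*c) := by rw [htdef, htlbdef]; ring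
      have hpos : 0 < (Real.log r - x)/(2*c) := div_pos (by linarith) (by linarith)
      clear_value t tlb
      linarith
    set N : ℕ := ⌈t⌉₊ with hNdef
    have hNt : ((N:ℝ) - t)^2 ≤ M^2 := by
      have hle : t ≤ (N:ℝ) := by rw [hNdef]; exact Nat.le_ceil t
      rcases le_or_gt t 0 with h0 | h0
      · have hN0 : (N:ℝ) = 0 := by
          rw [hNdef]; exact_mod_cast congrArg (Nat.cast (R := ℝ)) (Nat.ceil_eq_zero.mpr h0)
        have h1 : 1 - tlb ≤ M := le_max_right _ _
        clear_value N t tlb M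
        have hMt : -t ≤ M := by linarith
        rw [hN0]
        nlinarith [mul_nonneg (by linarith : (0:ℝ) ≤ M + t) (by linarith : (0:ℝ) ≤ M - t)]
      · have h2 : (N:ℝ) < t + 1 := by rw [hNdef]; exact Nat.ceil_lt_add_one h0.le
        clear_value N t tlb M
        nlinarith [mul_nonneg (by linarith : (0:ℝ) ≤ (N:ℝ) - t)
          (by linarith : (0:ℝ) ≤ 1 - ((N:ℝ) - t)), hM1]
    have hb := h N ε hε
    simp only [smul_zero, Finset.sum_const_zero, sub_zero] at hb
    have eA : A ^ (N+1) = Real.exp (((N:ℝ)+1) * a) := by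
      rw [← Real.exp_log hA, ← Real.exp_nat_mul]
      congr 1; push_cast; ring
    have eε : ‖ε‖ ^ (N+1) = Real.exp (((N:ℝ)+1) * x) := by
      conv_lhs => rw [← Real.exp_log habs]
      rw [← Real.exp_nat_mul]
      congr 1; push_cast; ring
    have eq1 : q ^ (((N:ℝ) * ((N:ℝ) + 1)) / (2 * (k:ℝ))) =
        Real.exp (L * (((N:ℝ) * ((N:ℝ) + 1)) / (2 * (k:ℝ)))) :=
      Real.rpow_def_of_pos hq0 _
    rw [eA, eq1, eε, hCexp] at hb
    rw [Real.rpow_def_of_pos habs, ← hxdef, hCexp]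
    refine hb.trans (mul_le_mul_of_nonneg_left (Real.exp_le_exp.mpr ?_) hC.le)
    have hkey : (c*M^2 + a - (a+c)^2/(4*c)) + -((k:ℝ)/(2*L))*x^2 + x*(1/2 - a/(2*c))
        - ((((N:ℝ)+1) * a) + L * (((N:ℝ) * ((N:ℝ) + 1)) / (2 * (k:ℝ))) + (((N:ℝ)+1) * x))
        = c * (M^2 - ((N:ℝ) - t)^2) := by
      rw [htdef, hcdef]; field_simp; ring
    have hnn : 0 ≤ c * (M^2 - ((N:ℝ) - t)^2) :=
      mul_nonneg hc.le (sub_nonneg.mpr hNt)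
    clear_value N t tlb M a c x L
    linarith
  · intro hflat S₁ hS₁
    obtain ⟨C, K, hC, hb⟩ := hflat S₁ hS₁
    obtain ⟨⟨θ₁, θ₂, r, hr, hS₁eq⟩, -⟩ := hS₁
    refine ⟨C * Real.exp (c*K^2), max 1 (Real.exp (c*(1-2*K))), by positivity,
      lt_of_lt_of_le one_pos (le_max_left _ _), ?_⟩
    intro N ε hε
    simp only [smul_zero, Finset.sum_const_zero, sub_zero]
    have hε0 : ε ≠ 0 := by rw [hS₁eq] at hε; exact hε.1
    have habs : 0 < ‖ε‖ := norm_pos_iff.mpr hε0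
    set x := Real.log (‖ε‖) with hxdef
    have hCexp : ∀ u v w z : ℝ, C * Real.exp (u + v + w + z)
        = C * Real.exp u * Real.exp v * Real.exp w * Real.exp z := by
      intro u v w z; rw [Real.exp_add, Real.exp_add, Real.exp_add]; ring
    have eε : ‖ε‖ ^ (N+1) = Real.exp (((N:ℝ)+1) * x) := by
      conv_lhs => rw [← Real.exp_log habs]
      rw [← Real.exp_nat_mul]
      congr 1; push_cast; ring
    have eq1 : q ^ (((N:ℝ) * ((N:ℝ) + 1)) / (2 * (k:ℝ))) =
        Real.exp (L * (((N:ℝ) * ((N:ℝ) + 1)) / (2 * (k:ℝ)))) :=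
      Real.rpow_def_of_pos hq0 _
    have e1 : Real.exp (c*(1-2*K)) ^ (N+1) = Real.exp (((N:ℝ)+1) * (c*(1-2*K))) := by
      rw [← Real.exp_nat_mul]
      congr 1; push_cast; ring
    have hb' := hb ε hε
    refine hb'.trans ?_
    calc C * Real.exp (-((k:ℝ) / (2 * L)) * x ^ 2) * ‖ε‖ ^ K
        = C * Real.exp (-((k:ℝ) / (2 * L)) * x ^ 2 + x * K) := by
          rw [Real.rpow_def_of_pos habs, ← hxdef, Real.exp_add]; ring
      _ ≤ C * Real.exp (c*K^2 + ((N:ℝ)+1) * (c*(1-2*K))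
            + L * (((N:ℝ) * ((N:ℝ) + 1)) / (2 * (k:ℝ))) + (((N:ℝ)+1) * x)) := by
          refine mul_le_mul_of_nonneg_left (Real.exp_le_exp.mpr ?_) hC.le
          have hkey : (c*K^2 + ((N:ℝ)+1) * (c*(1-2*K))
              + L * (((N:ℝ) * ((N:ℝ) + 1)) / (2 * (k:ℝ))) + (((N:ℝ)+1) * x))
              - (-((k:ℝ) / (2 * L)) * x ^ 2 + x * K)
              = (x + 2*c*((N:ℝ)+1-K))^2 / (4*c) := by
            rw [hcdef]; field_simp; ring
          have hpos : (0:ℝ) ≤ (x + 2*c*((N:ℝ)+1-K))^2 / (4*c) := by positivity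
          clear_value c x L
          linarith
      _ = C * Real.exp (c*K^2) * Real.exp (c*(1-2*K)) ^ (N+1)
            * q ^ (((N:ℝ) * ((N:ℝ) + 1)) / (2 * (k:ℝ))) * ‖ε‖ ^ (N+1) := by
          rw [e1, eq1, eε, hCexp]
      _ ≤ C * Real.exp (c*K^2) * (max 1 (Real.exp (c*(1-2*K)))) ^ (N+1)
            * q ^ (((N:ℝ) * ((N:ℝ) + 1)) / (2 * (k:ℝ))) * ‖ε‖ ^ (N+1) := by
          gcongr
          exact le_max_right _ _
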